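/- With Σ(z,ζ,q) := ∑_{n∈ℤ} (−1)^n ζ^{2n} q^{n²+2n}/(1 − z²q^{2n}), P(z,q) := ∏_{r≥1}(1 − zq^{r−1})(1 − z^{−1}q^r), and g(z,q) := −P(z⁴,q²)P(−1,q)/( P(−z²,q) P(z²q²,q²) ) · Σ(z,1,q) − z⁴ Σ(z²,z,q) − ∑'_{n∈ℤ} (−1)^n z^{−2n} q^{n(n+2)}/(1 − q^{2n}) (the last sum omitting n = 0), for complex q with 0 < |q| < 1 and complex z for which all expressions are defined, one has g(z,q) + g(z^{−1}q,q) = 0. -/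

import Mathlib

noncomputable section

/-- The infinite q-Pochhammer symbol `(a; q)_∞ = ∏_{k ≥ 0} (1 - a q^k)`. -/
def qPochInf (a q : ℂ) : ℂ := ∏' k : ℕ, (1 - a * q ^ k)

/-- The finite q-Pochhammer symbol `(a; q)_n = ∏_{k = 0}^{n-1} (1 - a q^k)`. -/
def qPochFin (a q : ℂ) (n : ℕ) : ℂ := ∏ k ∈ Finset.range n, (1 - a * q ^ k)

/-- An overpartition of `n`: a partition of `n` together with a set of part sizes
whose first occurrence is overlined. -/
structure Overpartition (n : ℕ) where
  toPartition : Nat.Partition n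
  overlined : Finset ℕ
  overlined_subset : overlined ⊆ toPartition.parts.toFinset

namespace Overpartition

variable {n : ℕ}

/-- The largest part `ℓ(λ)` (zero for the empty overpartition). -/
def largestPart (μ : Overpartition n) : ℕ := μ.toPartition.parts.sup

/-- The number of parts `n(λ)`. -/
def numParts (μ : Overpartition n) : ℕ := Multiset.card μ.toPartition.parts

/-- The number of odd non-overlined parts `n(λ_o)`. -/
def numOddNonOverlined (μ : Overpartition n) : ℕ :=
  Multiset.card (μ.toPartition.parts.filter (fun m => Odd m))
    - (μ.overlined.filter (fun m => Odd m)).card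

/-- `χ(λ) = 1` if the largest part of `λ` is odd and non-overlined, `0` otherwise. -/
def chi (μ : Overpartition n) : ℕ :=
  if Odd μ.largestPart ∧ μ.largestPart ∉ μ.overlined then 1 else 0

/-- The M₂-rank `⌈ℓ(λ)/2⌉ - n(λ) + n(λ_o) - χ(λ)` of an overpartition. -/
def m2Rank (μ : Overpartition n) : ℤ :=
  (((μ.largestPart + 1) / 2 : ℕ) : ℤ) - (μ.numParts : ℤ)
    + (μ.numOddNonOverlined : ℤ) - (μ.chi : ℤ)

/-- The (Dyson) rank of an overpartition: largest part minus number of parts. -/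
def rank (μ : Overpartition n) : ℤ := (μ.largestPart : ℤ) - (μ.numParts : ℤ)

end Overpartition

/-- `N̄₂(s, m, n)`: the number of overpartitions of `n` whose M₂-rank is `≡ s (mod m)`. -/
def N2bar (s m n : ℕ) : ℕ :=
  Nat.card {μ : Overpartition n // μ.m2Rank ≡ (s : ℤ) [ZMOD (m : ℤ)]}

/-- `N̄(s, m, n)`: the number of overpartitions of `n` whose rank is `≡ s (mod m)`. -/
def Nbar (s m n : ℕ) : ℕ :=
  Nat.card {μ : Overpartition n // μ.rank ≡ (s : ℤ) [ZMOD (m : ℤ)]}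

/-- `P(z, q) = ∏_{r ≥ 1} (1 - z q^{r-1})(1 - z⁻¹ q^r)`. -/
def Pprod (z q : ℂ) : ℂ := ∏' r : ℕ, ((1 - z * q ^ r) * (1 - z⁻¹ * q ^ (r + 1)))

/-- `Σ(z, ζ, q) = ∑_{n ∈ ℤ} (-1)^n ζ^{2n} q^{n²+2n} / (1 - z² q^{2n})`. -/
def SigmaSum (z ζ q : ℂ) : ℂ :=
  ∑' n : ℤ, (-1 : ℂ) ^ n * ζ ^ (2 * n) * q ^ (n ^ 2 + 2 * n) / (1 - z ^ 2 * q ^ (2 * n))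

/-- The function `g(z, q)` of Lemma 3.2. -/
def gFun (z q : ℂ) : ℂ :=
  -(Pprod (z ^ 4) (q ^ 2) * Pprod (-1) q / (Pprod (-(z ^ 2)) q * Pprod (z ^ 2 * q ^ 2) (q ^ 2)))
      * SigmaSum z 1 q
    - z ^ 4 * SigmaSum (z ^ 2) z q
    - ∑' n : {m : ℤ // m ≠ 0},
        (-1 : ℂ) ^ (n : ℤ) * z ^ (-2 * (n : ℤ)) * q ^ ((n : ℤ) * ((n : ℤ) + 2))
          / (1 - q ^ (2 * (n : ℤ)))

/-- The universal mock theta function `g₂(x, q)`. -/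
def g2fun (x q : ℂ) : ℂ :=
  qPochInf (-q) q / qPochInf q q *
    ∑' n : ℤ, (-1 : ℂ) ^ n * q ^ (n * (n + 1)) / (1 - x * q ^ n)

/-- The universal mock theta function `g₃(x, q)`. -/
def g3fun (x q : ℂ) : ℂ :=
  (1 / qPochInf q q) *
    ∑' n : ℤ, (-1 : ℂ) ^ n * q ^ (3 * n * (n + 1) / 2) / (1 - x * q ^ n)


open Filter in
private lemma hasProd_zero_of_factor' {ι : Type*} {f : ι → ℂ} (b : ι) (h : f b = 0) :
    HasProd f 0 := by
  have hev : ∀ᶠ s in (atTop : Filter (Finset ι)), ∏ i ∈ s, f i = 0 := by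
    filter_upwards [Filter.eventually_ge_atTop {b}] with s hs
    exact Finset.prod_eq_zero (hs (Finset.mem_singleton_self b)) h
  exact (tendsto_congr' (hev.mono fun s hs => hs.symm)).mp tendsto_const_nhds

open Filter in
private lemma multipliable_qfac' (a q : ℂ) (hq : ‖q‖ < 1) :
    Multipliable (fun r : ℕ => 1 - a * q ^ r) := by
  by_cases hzero : ∃ r, 1 - a * q ^ r = 0
  · obtain ⟨r₀, hr⟩ := hzero
    exact ⟨0, hasProd_zero_of_factor' r₀ hr⟩
  · push_neg at hzero
    refine Complex.multipliable_of_summable_log ?_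
    have hgeo : Summable (fun n : ℕ => (3/2 : ℝ) * (‖a‖ * ‖q‖ ^ n)) :=
      ((summable_geometric_of_lt_one (norm_nonneg q) hq).mul_left ‖a‖).mul_left _
    apply Summable.of_norm_bounded_eventually_nat hgeo
    have hto : Tendsto (fun n : ℕ => ‖a * q ^ n‖) atTop (nhds 0) := by
      have := (tendsto_pow_atTop_nhds_zero_of_norm_lt_one hq).const_mul a
      rw [mul_zero] at this
      simpa using this.norm
    filter_upwards [hto.eventually_le_const (by norm_num : (0:ℝ) < 1/2)] with n hn
    have h2 : ‖Complex.log (1 + (-(a * q ^ n)))‖ ≤ 3/2 * ‖-(a * q^n)‖ :=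
      Complex.norm_log_one_add_half_le_self (by simpa using hn)
    simpa [norm_mul, norm_pow, sub_eq_add_neg] using h2

private lemma mult_shift' (a q : ℂ) (hq : ‖q‖ < 1) :
    Multipliable (fun r : ℕ => 1 - a * q ^ (r + 1)) := by
  have := multipliable_qfac' (a * q) q hq
  refine this.congr fun r => ?_
  rw [pow_succ]; ring

private lemma inv_mul_pow_succ' (x Q : ℂ) (hx : x ≠ 0) (hQ : Q ≠ 0) (r : ℕ) :
    (x * Q)⁻¹ * Q ^ (r + 1) = x⁻¹ * Q ^ r := by
  rw [mul_inv, pow_succ]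
  field_simp

private lemma P_symm (x Q : ℂ) (hx : x ≠ 0) (hQ : Q ≠ 0) : Pprod (x⁻¹ * Q) Q = Pprod x Q := by
  unfold Pprod
  refine tprod_congr fun r => ?_
  have h1 : (x⁻¹ * Q)⁻¹ * Q ^ (r + 1) = x * Q ^ r := by
    rw [inv_mul_pow_succ' x⁻¹ Q (inv_ne_zero hx) hQ r, inv_inv]
  have h2 : x⁻¹ * Q * Q ^ r = x⁻¹ * Q ^ (r + 1) := by rw [pow_succ]; ring
  rw [h1, h2]; ring

private lemma P_shift (x Q : ℂ) (hx : x ≠ 0) (hQ0 : Q ≠ 0) (hQ : ‖Q‖ < 1) :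
    (1 - x) * Pprod (x * Q) Q = (1 - x⁻¹) * Pprod x Q := by
  have hu : Multipliable (fun r : ℕ => 1 - x * Q ^ r) := multipliable_qfac' x Q hQ
  have hu1 : Multipliable (fun r : ℕ => 1 - x * Q ^ (r + 1)) := mult_shift' x Q hQ
  have hv : Multipliable (fun r : ℕ => 1 - x⁻¹ * Q ^ r) := multipliable_qfac' x⁻¹ Q hQ
  have hv1 : Multipliable (fun r : ℕ => 1 - x⁻¹ * Q ^ (r + 1)) := mult_shift' x⁻¹ Q hQ
  have e1 : Pprod x Q = (∏' r : ℕ, (1 - x * Q ^ r)) * ∏' r : ℕ, (1 - x⁻¹ * Q ^ (r + 1)) := by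
    unfold Pprod; exact Multipliable.tprod_mul hu hv1
  have e2 : Pprod (x * Q) Q
      = (∏' r : ℕ, (1 - x * Q ^ (r + 1))) * ∏' r : ℕ, (1 - x⁻¹ * Q ^ r) := by
    unfold Pprod
    rw [← Multipliable.tprod_mul hu1 hv]
    refine tprod_congr fun r => ?_
    have h1 : (x * Q)⁻¹ * Q ^ (r + 1) = x⁻¹ * Q ^ r := inv_mul_pow_succ' x Q hx hQ0 r
    have h2 : x * Q * Q ^ r = x * Q ^ (r + 1) := by rw [pow_succ]; ring
    rw [h1, h2]
  have su : (∏' r : ℕ, (1 - x * Q ^ r)) = (1 - x * Q ^ 0) * ∏' r : ℕ, (1 - x * Q ^ (r + 1)) :=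
    tprod_eq_zero_mul' hu1
  have sv : (∏' r : ℕ, (1 - x⁻¹ * Q ^ r))
      = (1 - x⁻¹ * Q ^ 0) * ∏' r : ℕ, (1 - x⁻¹ * Q ^ (r + 1)) := tprod_eq_zero_mul' hv1
  rw [pow_zero, mul_one] at su sv
  rw [e1, e2, su, sv]; ring

private lemma P_shift' (x Q : ℂ) (hx : x ≠ 0) (hQ0 : Q ≠ 0) (hQ : ‖Q‖ < 1)
    (h1x : 1 - x ≠ 0) : Pprod (x * Q) Q = -x⁻¹ * Pprod x Q := by
  have h := P_shift x Q hx hQ0 hQ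
  have hx' : 1 - x⁻¹ = -x⁻¹ * (1 - x) := by field_simp; ring
  rw [hx'] at h
  exact mul_left_cancel₀ h1x
    (h.trans (by ring : (-x⁻¹ * (1-x)) * Pprod x Q = (1-x) * (-x⁻¹ * Pprod x Q)))

private lemma Pprod_eq_zero_of_factor (a Q : ℂ) (h : 1 - a⁻¹ * Q = 0) : Pprod a Q = 0 := by
  have h0 : (1 - a * Q ^ 0) * (1 - a⁻¹ * Q ^ (0+1)) = 0 := by
    rw [zero_add, pow_one, h, mul_zero]
  exact (hasProd_zero_of_factor' 0 h0).tprod_eq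

private lemma neg_one_zpow_inv' (m : ℤ) : ((-1:ℂ)^m)⁻¹ = (-1:ℂ)^m :=
  inv_eq_of_mul_eq_one_left (by rw [← mul_zpow]; norm_num)

private lemma neg_one_zpow_neg' (n : ℤ) : (-1:ℂ)^(-n) = (-1:ℂ)^n := by
  rw [zpow_neg, neg_one_zpow_inv']

private lemma neg_one_zpow_sub_one' (n : ℤ) : (-1:ℂ)^(-n-1) = -((-1:ℂ)^n) := by
  have h1 : (-n-1 : ℤ) = -(n+1) := by ring
  rw [h1, zpow_neg, neg_one_zpow_inv', zpow_add₀ (by norm_num : (-1:ℂ) ≠ 0), zpow_one]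
  ring

private lemma neg_one_zpow_sub_two' (n : ℤ) : (-1:ℂ)^(-n-2) = (-1:ℂ)^n := by
  have h1 : (-n-2 : ℤ) = -(n+2) := by ring
  rw [h1, zpow_neg, neg_one_zpow_inv', zpow_add₀ (by norm_num : (-1:ℂ) ≠ 0)]
  norm_num

private def negSubEquiv (c : ℤ) : ℤ ≃ ℤ :=
  ⟨fun n => -n - c, fun n => -n - c, fun n => by simp, fun n => by simp⟩

private def negE : {m : ℤ // m ≠ 0} ≃ {m : ℤ // m ≠ 0} :=
  ⟨fun n => ⟨-n.1, neg_ne_zero.mpr n.2⟩, fun n => ⟨-n.1, neg_ne_zero.mpr n.2⟩,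
   fun n => by simp, fun n => by simp⟩

set_option maxHeartbeats 1000000 in
private lemma S1 (q z : ℂ) (hq0 : q ≠ 0) (hz : z ≠ 0)
    (hd2 : ∀ n : ℤ, 1 - z ^ 2 * q ^ (2 * n) ≠ 0) :
    SigmaSum (z⁻¹ * q) 1 q = z ^ 2 * q⁻¹ * SigmaSum z 1 q := by
  unfold SigmaSum
  rw [← Equiv.tsum_eq (negSubEquiv 1), ← tsum_mul_left]
  refine tsum_congr fun n => ?_
  show (-1:ℂ)^(-n-1) * (1:ℂ)^(2*(-n-1)) * q ^ ((-n-1)^2 + 2*(-n-1))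
      / (1 - (z⁻¹*q)^2 * q^(2*(-n-1))) = _
  have hQn : q ^ (2*n) ≠ 0 := zpow_ne_zero _ hq0
  have hA : q ^ ((-n-1)^2 + 2*(-n-1)) = q ^ (n^2+2*n) * (q ^ (2*n))⁻¹ * q⁻¹ := by
    rw [← zpow_neg, ← zpow_add₀ hq0, ← zpow_neg_one, ← zpow_add₀ hq0]
    congr 1; ring
  have hq2 : q ^ (2*(-n-1)) = (q ^ (2*n))⁻¹ * ((q:ℂ)^(2:ℕ))⁻¹ := by
    rw [← zpow_neg, ← zpow_natCast q 2, ← zpow_neg, ← zpow_add₀ hq0]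
    congr 1; ring
  have hden : 1 - (z⁻¹*q)^2 * ((q ^ (2*n))⁻¹ * ((q:ℂ)^(2:ℕ))⁻¹)
      = -((z^(2:ℕ))⁻¹ * (q ^ (2*n))⁻¹) * (1 - z^2 * q^(2*n)) := by
    field_simp
    ring
  have hD1 : 1 - (z⁻¹*q)^2 * ((q ^ (2*n))⁻¹ * ((q:ℂ)^(2:ℕ))⁻¹) ≠ 0 := by
    rw [hden]
    exact mul_ne_zero (neg_ne_zero.2 (mul_ne_zero (inv_ne_zero (pow_ne_zero 2 hz))
      (inv_ne_zero hQn))) (hd2 n)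
  rw [neg_one_zpow_sub_one', one_zpow, hA, hq2, ← mul_div_assoc,
    div_eq_div_iff hD1 (hd2 n), hden]
  field_simp
  ring_nf
  simp only [one_zpow, mul_one]
  ring

set_option maxHeartbeats 1000000 in
private lemma S2 (q z : ℂ) (hq0 : q ≠ 0) (hz : z ≠ 0)
    (hd4 : ∀ n : ℤ, 1 - z ^ 4 * q ^ (2 * n) ≠ 0) :
    (z⁻¹*q) ^ 4 * SigmaSum ((z⁻¹*q) ^ 2) (z⁻¹*q) q = -(z ^ 4 * SigmaSum (z ^ 2) z q) := by
  unfold SigmaSum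
  rw [← tsum_mul_left, ← Equiv.tsum_eq (negSubEquiv 2), ← tsum_mul_left, ← tsum_neg]
  refine tsum_congr fun n => ?_
  show (z⁻¹*q)^4 * ((-1:ℂ)^(-n-2) * (z⁻¹*q)^(2*(-n-2)) * q ^ ((-n-2)^2 + 2*(-n-2))
      / (1 - ((z⁻¹*q)^2)^2 * q^(2*(-n-2)))) = _
  have hQn : q ^ (2*n) ≠ 0 := zpow_ne_zero _ hq0
  have hA : q ^ ((-n-2)^2 + 2*(-n-2)) = q ^ (n^2+2*n) := by congr 1; ring
  have hq4 : q ^ (2*(-n-2)) = (q ^ (2*n))⁻¹ * ((q:ℂ)^(4:ℕ))⁻¹ := by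
    rw [← zpow_neg, ← zpow_natCast q 4, ← zpow_neg, ← zpow_add₀ hq0]
    congr 1; ring
  have hB : (z⁻¹*q)^(2*(-n-2)) = (z^(2*n) * z^(4:ℕ)) * ((q ^ (2*n))⁻¹ * ((q:ℂ)^(4:ℕ))⁻¹) := by
    rw [mul_zpow, inv_zpow, ← zpow_neg, hq4]
    congr 1
    rw [← zpow_natCast z 4, ← zpow_add₀ hz]
    congr 1; ring
  have hpow : ((z⁻¹*q)^(2:ℕ))^(2:ℕ) = (z^(4:ℕ))⁻¹ * q^(4:ℕ) := by
    rw [← pow_mul, mul_pow, inv_pow]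
  have hpow2 : ((z:ℂ)^(2:ℕ))^(2:ℕ) = z^(4:ℕ) := by rw [← pow_mul]
  have hden : 1 - (z^(4:ℕ))⁻¹ * q^(4:ℕ) * ((q ^ (2*n))⁻¹ * ((q:ℂ)^(4:ℕ))⁻¹)
      = -((z^(4:ℕ))⁻¹ * (q ^ (2*n))⁻¹) * (1 - z^4 * q^(2*n)) := by
    field_simp
    ring
  have hD1 : 1 - (z^(4:ℕ))⁻¹ * q^(4:ℕ) * ((q ^ (2*n))⁻¹ * ((q:ℂ)^(4:ℕ))⁻¹) ≠ 0 := by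
    rw [hden]
    exact mul_ne_zero (neg_ne_zero.2 (mul_ne_zero (inv_ne_zero (pow_ne_zero 4 hz))
      (inv_ne_zero hQn))) (hd4 n)
  rw [neg_one_zpow_sub_two', hA, hq4, hB, hpow, hpow2, ← mul_div_assoc, ← mul_div_assoc,
    ← neg_div, div_eq_div_iff hD1 (hd4 n), hden]
  field_simp

set_option maxHeartbeats 1000000 in
private lemma S3 (q z : ℂ) (hq0 : q ≠ 0) (hz : z ≠ 0) :
    (∑' n : {m : ℤ // m ≠ 0},
        (-1:ℂ)^(n:ℤ) * (z⁻¹*q)^(-2*(n:ℤ)) * q^((n:ℤ)*((n:ℤ)+2)) / (1 - q^(2*(n:ℤ))))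
    = -∑' n : {m : ℤ // m ≠ 0},
        (-1:ℂ)^(n:ℤ) * z^(-2*(n:ℤ)) * q^((n:ℤ)*((n:ℤ)+2)) / (1 - q^(2*(n:ℤ))) := by
  rw [← Equiv.tsum_eq negE, ← tsum_neg]
  refine tsum_congr fun n => ?_
  show (-1:ℂ)^(-(n:ℤ)) * (z⁻¹*q)^(-2*(-(n:ℤ))) * q^((-(n:ℤ))*((-(n:ℤ))+2)) / (1 - q^(2*(-(n:ℤ))))
      = _
  have hQn : q ^ (2*(n:ℤ)) ≠ 0 := zpow_ne_zero _ hq0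
  by_cases hD : 1 - q ^ (2*(n:ℤ)) = 0
  · have h1 : q ^ (2*(n:ℤ)) = 1 := (sub_eq_zero.mp hD).symm
    have h2 : 1 - q ^ (2*(-(n:ℤ))) = 0 := by
      rw [show (2*(-(n:ℤ))) = -(2*(n:ℤ)) by ring, zpow_neg, h1]
      norm_num
    rw [h2, hD, div_zero, div_zero, neg_zero]
  · have hq2 : q ^ (2*(-(n:ℤ))) = (q ^ (2*(n:ℤ)))⁻¹ := by
      rw [show (2*(-(n:ℤ))) = -(2*(n:ℤ)) by ring, zpow_neg]
    have hz2 : z^(-2*(n:ℤ)) = (z^(2*(n:ℤ)))⁻¹ := by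
      rw [← zpow_neg]; congr 1; ring
    have hB : (z⁻¹*q)^(-2*(-(n:ℤ))) = (z^(2*(n:ℤ)))⁻¹ * q^(2*(n:ℤ)) := by
      rw [mul_zpow, inv_zpow, ← zpow_neg, ← zpow_neg]
      congr 2 <;> ring
    have hA : q^((-(n:ℤ))*((-(n:ℤ))+2)) = q^((n:ℤ)*((n:ℤ)+2)) * ((q^(2*(n:ℤ)))⁻¹)
        * ((q^(2*(n:ℤ)))⁻¹) := by
      rw [← zpow_neg, ← zpow_add₀ hq0, ← zpow_add₀ hq0]
      congr 1; ring
    have hden : 1 - (q ^ (2*(n:ℤ)))⁻¹ = -(q ^ (2*(n:ℤ)))⁻¹ * (1 - q ^ (2*(n:ℤ))) := by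
      field_simp
      ring
    have hD1 : 1 - (q ^ (2*(n:ℤ)))⁻¹ ≠ 0 := by
      rw [hden]
      exact mul_ne_zero (neg_ne_zero.2 (inv_ne_zero hQn)) hD
    rw [neg_one_zpow_neg', hB, hA, hq2, hz2, ← neg_div, div_eq_div_iff hD1 hD, hden]
    have hX : q^(2*(n:ℤ)) * (q^(2*(n:ℤ)))⁻¹ = 1 := mul_inv_cancel₀ hQn
    linear_combination ((-1:ℂ)^(n:ℤ) * q^((n:ℤ)*((n:ℤ)+2)) * (q^(2*(n:ℤ)))⁻¹ * (z^(2*(n:ℤ)))⁻¹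
      * (1 - q^(2*(n:ℤ)))) * hX


theorem stmt17 (q z : ℂ) (hq0 : q ≠ 0) (hq : ‖q‖ < 1) (hz : z ≠ 0)
    (hd2 : ∀ n : ℤ, 1 - z ^ 2 * q ^ (2 * n) ≠ 0)
    (hd4 : ∀ n : ℤ, 1 - z ^ 4 * q ^ (2 * n) ≠ 0)
    (hP1 : Pprod (-(z ^ 2)) q ≠ 0) (hP2 : Pprod (z ^ 2 * q ^ 2) (q ^ 2) ≠ 0)
    (hP3 : Pprod (-((z⁻¹ * q) ^ 2)) q ≠ 0)
    (hP4 : Pprod ((z⁻¹ * q) ^ 2 * q ^ 2) (q ^ 2) ≠ 0) :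
    gFun z q + gFun (z⁻¹ * q) q = 0 := by
  have hq20 : (q:ℂ)^2 ≠ 0 := pow_ne_zero 2 hq0
  have hq2norm : ‖(q:ℂ)^2‖ < 1 := by
    rw [norm_pow]
    exact pow_lt_one₀ (norm_nonneg q) hq (by norm_num)
  have hz2 : (z:ℂ)^2 ≠ 0 := pow_ne_zero 2 hz
  have hz4 : (z:ℂ)^4 ≠ 0 := pow_ne_zero 4 hz
  have h1z2 : (1:ℂ) - z^2 ≠ 0 := by
    have := hd2 0
    simpa using this
  have h1x4 : (1:ℂ) - (z^4)⁻¹ * q^2 ≠ 0 := by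
    intro h
    apply hd4 (-1)
    have hx : q^2 = z^4 := by
      have h' := sub_eq_zero.mp h
      field_simp at h'
      linear_combination -h'
    have hqm2 : q ^ ((2:ℤ)*(-1)) = ((q:ℂ)^2)⁻¹ := by
      rw [show (2:ℤ)*(-1) = -(2:ℕ) by norm_num, zpow_neg, zpow_natCast]
    rw [hqm2, hx]
    field_simp
    norm_num
  have h1x2 : (1:ℂ) - (z^2)⁻¹ * q^2 ≠ 0 := by
    intro h
    apply hd2 (-1)
    have hx : q^2 = z^2 := by
      have h' := sub_eq_zero.mp h
      field_simp at h'
      linear_combination -h'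
    have hqm2 : q ^ ((2:ℤ)*(-1)) = ((q:ℂ)^2)⁻¹ := by
      rw [show (2:ℤ)*(-1) = -(2:ℕ) by norm_num, zpow_neg, zpow_natCast]
    rw [hqm2, hx]
    field_simp
    norm_num
  have h1xB : (1:ℂ) - (-(z^2))⁻¹ * q ≠ 0 := fun h => hP1 (Pprod_eq_zero_of_factor _ _ h)
  -- the three product identities
  have hPA : Pprod ((z⁻¹*q)^4) (q^2) = -(z^4 * ((q:ℂ)^2)⁻¹) * Pprod (z^4) (q^2) := by
    have harg : ((z⁻¹*q):ℂ)^4 = (z^4)⁻¹ * q^2 * q^2 := by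
      rw [mul_pow, inv_pow]; ring
    rw [harg, P_shift' ((z^4)⁻¹ * q^2) (q^2) (mul_ne_zero (inv_ne_zero hz4) hq20) hq20
        hq2norm h1x4, P_symm (z^4) (q^2) hz4 hq20]
    congr 1
    rw [mul_inv, inv_inv]
  have hPB : Pprod (-((z⁻¹*q)^2)) q = (z^2 * q⁻¹) * Pprod (-(z^2)) q := by
    have harg : -(((z⁻¹*q):ℂ)^2) = (-(z^2))⁻¹ * q * q := by
      rw [mul_pow, inv_pow]; field_simp
    have hxne : ((-(z^2)):ℂ)⁻¹ * q ≠ 0 :=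
      mul_ne_zero (inv_ne_zero (neg_ne_zero.2 hz2)) hq0
    rw [harg, P_shift' ((-(z^2))⁻¹ * q) q hxne hq0 hq h1xB, P_symm (-(z^2)) q
        (neg_ne_zero.2 hz2) hq0]
    congr 1
    rw [mul_inv, inv_inv]
    ring
  have hPC : Pprod ((z⁻¹*q)^2 * q^2) (q^2) = (z^4 * ((q:ℂ)^2)⁻¹) * Pprod (z^2*q^2) (q^2) := by
    have harg : ((z⁻¹*q):ℂ)^2 * q^2 = (z^2)⁻¹ * q^2 * q^2 := by
      rw [mul_pow, inv_pow]
    have hstep2 : Pprod (z^2) (q^2) = -(z^2) * Pprod (z^2*q^2) (q^2) := by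
      rw [P_shift' (z^2) (q^2) hz2 hq20 hq2norm h1z2]
      field_simp
    rw [harg, P_shift' ((z^2)⁻¹ * q^2) (q^2) (mul_ne_zero (inv_ne_zero hz2) hq20) hq20
        hq2norm h1x2, P_symm (z^2) (q^2) hz2 hq20, hstep2, mul_inv, inv_inv]
    field_simp
  have hS1 := S1 q z hq0 hz hd2
  have hS2 := S2 q z hq0 hz hd4
  have hS3 := S3 q z hq0 hz
  unfold gFun
  rw [hPA, hPB, hPC, hS1, hS2, hS3]
  have hPd : Pprod (-(z ^ 2)) q * Pprod (z ^ 2 * q ^ 2) (q ^ 2) ≠ 0 := mul_ne_zero hP1 hP2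
  field_simp [hP1, hP2]
  have hfrac : z ^ 4 * Pprod (z ^ 4) (q ^ 2) * Pprod (-1) q * (q * q ^ 2) * (z ^ 2 * SigmaSum z 1 q) /
      (q ^ 2 * (z ^ 2 * Pprod (-z ^ 2) q * (z ^ 4 * Pprod (z ^ 2 * q ^ 2) (q ^ 2))) * q)
      = Pprod (z ^ 4) (q ^ 2) * Pprod (-1) q * SigmaSum z 1 q /
        (Pprod (-z ^ 2) q * Pprod (z ^ 2 * q ^ 2) (q ^ 2)) := by
    rw [div_eq_div_iff (by
      refine mul_ne_zero (mul_ne_zero hq20 (mul_ne_zero (mul_ne_zero hz2 hP1)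
        (mul_ne_zero hz4 hP2))) hq0) hPd]
    ring
  ring

end
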